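/- arXiv:2601.12450 — 2 statements merged into one kernel-verified Lean document; each statement's English description precedes it below -/
import Mathlib

section
/- For any centers (x, y), (x', y') ∈ ℝ² and radii r, r' > 0, the supremum over t ∈ [0, 2π] of the Euclidean distance between the points (r·cos t + x, r·sin t + y) and (r'·cos t + x', r'·sin t + y') equals |r' - r| + sqrt((x' - x)² + (y' - y)²). -/
lemma exp_unit_surj (u : ℂ) (hu : ‖u‖ = 1) :
    ∃ t ∈ Set.Icc (0:ℝ) (2*Real.pi), Complex.exp (t * Complex.I) = u := by
  have harg := Complex.arg_mem_Ioc u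
  have hexp : Complex.exp (u.arg * Complex.I) = u := by
    have := Complex.norm_mul_exp_arg_mul_I u
    rwa [hu, Complex.ofReal_one, one_mul] at this
  rcases le_or_gt 0 u.arg with h | h
  · exact ⟨u.arg, ⟨h, le_trans harg.2 (by linarith [Real.pi_pos])⟩, hexp⟩
  · refine ⟨u.arg + 2*Real.pi, ⟨by linarith [harg.1, Real.pi_pos], by linarith⟩, ?_⟩
    have : ((u.arg + 2*Real.pi : ℝ) : ℂ) * Complex.I
        = u.arg * Complex.I + 2*Real.pi*Complex.I := by push_cast; ring
    rw [this, Complex.exp_add, Complex.exp_two_pi_mul_I, mul_one, hexp]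

/-- The sup over `t ∈ [0, 2π]` of the distance between corresponding points
`(r cos t + x, r sin t + y)` and `(r' cos t + x', r' sin t + y')` on two circles
equals `|r' - r| + √((x'-x)² + (y'-y)²)`. -/
theorem stmt1 (x y x' y' r r' : ℝ) (hr : 0 < r) (hr' : 0 < r') :
    sSup ((fun t : ℝ =>
        dist (((r * Real.cos t + x : ℝ) : ℂ) + ((r * Real.sin t + y : ℝ) : ℂ) * Complex.I)
             (((r' * Real.cos t + x' : ℝ) : ℂ) + ((r' * Real.sin t + y' : ℝ) : ℂ) * Complex.I))
      '' Set.Icc 0 (2 * Real.pi)) =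
      |r' - r| + Real.sqrt ((x' - x) ^ 2 + (y' - y) ^ 2) := by
  set c : ℝ := r' - r with hc
  set w : ℂ := ((x' - x : ℝ) : ℂ) + ((y' - y : ℝ) : ℂ) * Complex.I with hw
  have habsw : ‖w‖ = Real.sqrt ((x'-x)^2 + (y'-y)^2) := by
    rw [hw, Complex.norm_def, Complex.normSq_add_mul_I]
  have key : ∀ t : ℝ,
      dist (((r * Real.cos t + x : ℝ) : ℂ) + ((r * Real.sin t + y : ℝ) : ℂ) * Complex.I)
           (((r' * Real.cos t + x' : ℝ) : ℂ) + ((r' * Real.sin t + y' : ℝ) : ℂ) * Complex.I)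
      = ‖(c : ℂ) * Complex.exp (t * Complex.I) + w‖ := by
    intro t
    rw [Complex.dist_eq, ← norm_neg]
    congr 1
    rw [Complex.exp_mul_I, hw, hc]
    push_cast
    ring
  rw [← habsw]
  apply IsGreatest.csSup_eq
  constructor
  · -- membership: attained
    rcases eq_or_ne w 0 with hw0 | hw0
    · refine ⟨0, Set.left_mem_Icc.2 (by positivity), ?_⟩
      simp only [key 0, hw0, map_zero, add_zero, Complex.ofReal_zero, zero_mul,
        Complex.exp_zero, mul_one, norm_zero, Complex.norm_real, Real.norm_eq_abs]
    · set a : ℝ := ‖w‖ with ha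
      have ha0 : 0 < a := by simpa [ha] using norm_pos_iff.mpr hw0
      set s : ℝ := if 0 ≤ c then (1:ℝ) else -1 with hs
      have hcs : (c * s) = |c| := by
        rcases le_or_gt 0 c with h | h
        · simp [hs, h, abs_of_nonneg h]
        · simp [hs, not_le.2 h, abs_of_neg h]
      set u : ℂ := (s : ℂ) * (w / (a : ℂ)) with hu
      have huabs : ‖u‖ = 1 := by
        have hs1 : |s| = 1 := by
          rcases le_or_gt 0 c with h | h
          · simp [hs, h]
          · simp [hs, not_le.2 h]
        rw [hu, norm_mul, norm_div, Complex.norm_real, Complex.norm_real, Real.norm_eq_abs, Real.norm_eq_abs, ← ha,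
          abs_of_pos ha0, div_self ha0.ne', hs1, mul_one]
      obtain ⟨t, ht, hte⟩ := exp_unit_surj u huabs
      refine ⟨t, ht, ?_⟩
      simp only [key t, hte]
      have hne : (a : ℂ) ≠ 0 := by exact_mod_cast ha0.ne'
      have hrw : (c : ℂ) * u + w = (((|c| + a)/a : ℝ) : ℂ) * w := by
        rw [hu]
        push_cast
        rw [← hcs]
        field_simp
        push_cast
        ring
      rw [hrw, norm_mul, Complex.norm_real, Real.norm_eq_abs, ← ha,
        abs_of_nonneg (by positivity), div_mul_cancel₀ _ ha0.ne']
  · rintro v ⟨t, ht, rfl⟩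
    simp only [key t]
    calc ‖(c : ℂ) * Complex.exp (t * Complex.I) + w‖
        ≤ ‖(c : ℂ) * Complex.exp (t * Complex.I)‖ + ‖w‖ :=
          norm_add_le _ _
      _ = |c| + ‖w‖ := by
          rw [norm_mul, Complex.norm_exp_ofReal_mul_I, mul_one, Complex.norm_real, Real.norm_eq_abs]
end

section
/- For a continuous path in the space of pairs of disjoint embedded circles in the plane, nesting is preserved: let f, g : [0,1] × S¹ → ℝ² be continuous, with f(t, ·) and g(t, ·) injective and f(t, S¹) ∩ g(t, S¹) = ∅ for every t. If g(0, S¹) is contained in the bounded complementary component of f(0, S¹), then g(1, S¹) is contained in the bounded complementary component of f(1, S¹). -/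
open Set

noncomputable section JordanAux

/-- `γ` winds `k` times around `0` over the parameter interval `[0,1]`. -/
def windsTo (γ : ℝ → ℂ) (k : ℤ) : Prop :=
  ∃ ℓ : ℝ → ℂ, Continuous ℓ ∧ (∀ t ∈ Icc (0:ℝ) 1, Complex.exp (ℓ t) = γ t) ∧
    ℓ 1 - ℓ 0 = 2 * Real.pi * Complex.I * k

lemma re_pos_of_norm_sub_one_lt {w : ℂ} (h : ‖w - 1‖ < 1) : 0 < w.re := by
  have h2 : ‖w - 1‖ ^ 2 < 1 := by nlinarith [norm_nonneg (w - 1)]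
  have h3 : (w - 1).re ^ 2 + (w - 1).im ^ 2 < 1 := by
    have := Complex.sq_norm (w - 1)
    rw [Complex.normSq_apply] at this
    nlinarith [this]
  have hre : (w.re - 1) ^ 2 < 1 := by
    have e1 : (w - 1).re = w.re - 1 := by simp
    rw [e1] at h3
    nlinarith [sq_nonneg (w - 1).im]
  nlinarith

lemma ratio_props {a b : ℂ} (h : ‖b - a‖ < ‖a‖) :
    a ≠ 0 ∧ b ≠ 0 ∧ 0 < (b / a).re ∧ b / a ≠ 0 := by
  have ha : a ≠ 0 := by
    intro h0
    rw [h0] at h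
    simp only [norm_zero] at h
    exact absurd h (by simp [norm_nonneg])
  have hb : b ≠ 0 := by
    intro h0; rw [h0] at h; simp at h
  have hr : ‖b / a - 1‖ < 1 := by
    rw [show b / a - 1 = (b - a) / a by field_simp, norm_div,
      div_lt_one (norm_pos_iff.mpr ha)]
    exact h
  exact ⟨ha, hb, re_pos_of_norm_sub_one_lt hr, div_ne_zero hb ha⟩

end JordanAux

section Lift
open Complex

lemma liftExists (γ : ℝ → ℂ) (hc : Continuous γ) (hne : ∀ t, γ t ≠ 0) :
    ∃ ℓ : ℝ → ℂ, Continuous ℓ ∧ ∀ t ∈ Icc (0:ℝ) 1, Complex.exp (ℓ t) = γ t := by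
  obtain ⟨t₀, ht₀, hmin⟩ := isCompact_Icc.exists_isMinOn (α := ℝ)
    (Set.nonempty_Icc.mpr zero_le_one) ((continuous_norm.comp hc).continuousOn)
  set m := ‖γ t₀‖ with hm_def
  have hm : 0 < m := norm_pos_iff.mpr (hne t₀)
  have hmin' : ∀ t ∈ Icc (0:ℝ) 1, m ≤ ‖γ t‖ := fun t ht => hmin ht
  have huc := isCompact_Icc.uniformContinuousOn_of_continuous (s := Icc (0:ℝ) 1) hc.continuousOn
  rw [Metric.uniformContinuousOn_iff] at huc
  obtain ⟨δ, hδ, hδ'⟩ := huc m hm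
  obtain ⟨N, hN⟩ := exists_nat_gt (1/δ)
  have hNpos : 0 < (N:ℝ) := lt_trans (by positivity) hN
  have hstep : 1/(N:ℝ) < δ := by
    rw [div_lt_iff₀ hNpos]
    rw [div_lt_iff₀ hδ] at hN
    linarith
  have key : ∀ k : ℕ, k ≤ N →
      ∃ ℓ : ℝ → ℂ, Continuous ℓ ∧ ∀ t ∈ Icc (0:ℝ) ((k:ℝ)/N), Complex.exp (ℓ t) = γ t := by
    intro k
    induction k with
    | zero =>
      intro _
      refine ⟨fun _ => Complex.log (γ 0), continuous_const, fun t ht => ?_⟩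
      have ht' : t = 0 := le_antisymm (by simpa using ht.2) ht.1
      rw [ht', Complex.exp_log (hne 0)]
    | succ k ih =>
      intro hk1
      obtain ⟨ℓ, hℓc, hℓ⟩ := ih (Nat.le_of_succ_le hk1)
      set a := (k:ℝ)/N with ha_def
      set b := ((k+1:ℕ):ℝ)/N with hb_def
      have ha0 : 0 ≤ a := by positivity
      have hab : a ≤ b := by
        rw [ha_def, hb_def]
        gcongr
        exact_mod_cast Nat.le_succ k
      have hb1 : b ≤ 1 := by
        rw [hb_def, div_le_one hNpos]
        exact_mod_cast hk1
      have hba : b - a = 1/N := by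
        rw [ha_def, hb_def, div_sub_div_same]
        push_cast
        ring_nf
      set r := fun t => γ (min t b) / γ (min t a) with hr_def
      have hr1 : ∀ t, ‖γ (min t b) - γ (min t a)‖ < ‖γ (min t a)‖ := by
        intro t
        by_cases htle : t ≤ a
        · rw [min_eq_left (htle.trans hab), min_eq_left htle]
          simpa using norm_pos_iff.mpr (hne t)
        · push_neg at htle
          have hmina : min t a = a := min_eq_right htle.le
          rw [hmina]
          have hx1 : a ≤ min t b := le_min htle.le hab
          have hx2 : min t b ≤ b := min_le_right _ _
          have hxI : min t b ∈ Icc (0:ℝ) 1 := ⟨ha0.trans hx1, hx2.trans hb1⟩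
          have haI : a ∈ Icc (0:ℝ) 1 := ⟨ha0, hab.trans hb1⟩
          have hdist : dist (min t b) a < δ := by
            have hnn : (0:ℝ) ≤ min t b - a := by
              simp only [min_def]
              split <;> linarith
            rw [Real.dist_eq, _root_.abs_of_nonneg hnn]
            calc min t b - a ≤ b - a := by linarith
            _ = 1/N := hba
            _ < δ := hstep
          calc ‖γ (min t b) - γ a‖ = dist (γ (min t b)) (γ a) := (dist_eq_norm _ _).symm
          _ < m := hδ' _ hxI _ haI hdist
          _ ≤ ‖γ a‖ := hmin' a haI
      have hrne : ∀ t, γ (min t a) ≠ 0 := fun t => (ratio_props (hr1 t)).1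
      have hrcont : Continuous r := by
        apply Continuous.div
        · exact hc.comp (continuous_id.min continuous_const)
        · exact hc.comp (continuous_id.min continuous_const)
        · exact hrne
      have hLcont : Continuous fun t => Complex.log (r t) := by
        rw [continuous_iff_continuousAt]
        intro t
        refine (continuousAt_clog ?_).comp hrcont.continuousAt
        exact Complex.mem_slitPlane_iff.mpr (Or.inl (ratio_props (hr1 t)).2.2.1)
      refine ⟨fun t => ℓ (min t a) + Complex.log (r t),
        (hℓc.comp (continuous_id.min continuous_const)).add hLcont, fun t ht => ?_⟩
      obtain ⟨ht0, htb⟩ := ht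
      by_cases htle : t ≤ a
      · have h1 : min t a = t := min_eq_left htle
        have h2 : min t b = t := min_eq_left (htle.trans hab)
        simp only [hr_def, h1, h2]
        rw [div_self (hne t), Complex.log_one, add_zero]
        exact hℓ t ⟨ht0, htle⟩
      · push_neg at htle
        have h1 : min t a = a := min_eq_right htle.le
        have h2 : min t b = t := min_eq_left htb
        simp only [hr_def, h1, h2]
        rw [Complex.exp_add, Complex.exp_log (div_ne_zero (hne t) (hne a)),
          hℓ a ⟨ha0, le_refl a⟩, mul_comm, div_mul_cancel₀ _ (hne a)]
  obtain ⟨ℓ, h1, h2⟩ := key N le_rfl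
  refine ⟨ℓ, h1, fun t ht => h2 t ?_⟩
  rwa [div_self (ne_of_gt hNpos)]

end Lift

section WindBasic
open Complex

lemma intmul_constant (u : ℝ → ℝ) (hu : Continuous u) (a : ℝ) (ha : 0 < a)
    (h : ∀ t ∈ Icc (0:ℝ) 1, ∃ m : ℤ, u t = m * a) : u 1 = u 0 := by
  by_contra hne
  obtain ⟨m₀, hm₀⟩ := h 0 ⟨le_refl _, zero_le_one⟩
  obtain ⟨m₁, hm₁⟩ := h 1 ⟨zero_le_one, le_refl _⟩
  have hmm : m₀ ≠ m₁ := fun he => hne (by rw [hm₁, hm₀, he])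
  set M := min m₀ m₁ with hM
  set c := (M:ℝ) * a + a/2 with hc
  have hminu : min (u 0) (u 1) ≤ c := by
    rcases le_total m₀ m₁ with h'|h'
    · calc min (u 0) (u 1) ≤ u 0 := min_le_left _ _
      _ = (M:ℝ) * a := by rw [hm₀, hM, min_eq_left h']
      _ ≤ c := by rw [hc]; linarith
    · calc min (u 0) (u 1) ≤ u 1 := min_le_right _ _
      _ = (M:ℝ) * a := by rw [hm₁, hM, min_eq_right h']
      _ ≤ c := by rw [hc]; linarith
  have hmaxu : c ≤ max (u 0) (u 1) := by
    have h1 : (M + 1 : ℤ) ≤ max m₀ m₁ := by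
      rcases le_total m₀ m₁ with h'|h' <;>
        [rw [hM, min_eq_left h', max_eq_right h']; rw [hM, min_eq_right h', max_eq_left h']] <;>
        omega
    have h2 : ((max m₀ m₁ : ℤ):ℝ) * a ≤ max (u 0) (u 1) := by
      rcases le_total m₀ m₁ with h'|h'
      · rw [max_eq_right h']; exact le_max_of_le_right (le_of_eq hm₁.symm)
      · rw [max_eq_left h']; exact le_max_of_le_left (le_of_eq hm₀.symm)
    have h3 : ((M + 1 : ℤ):ℝ) * a ≤ ((max m₀ m₁ : ℤ):ℝ) * a := by
      have : ((M + 1 : ℤ):ℝ) ≤ ((max m₀ m₁ : ℤ):ℝ) := by exact_mod_cast h1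
      exact mul_le_mul_of_nonneg_right this ha.le
    calc c ≤ ((M + 1 : ℤ):ℝ) * a := by rw [hc]; push_cast; linarith
    _ ≤ _ := h3.trans h2
  obtain ⟨t, ht, hut⟩ : c ∈ u '' Icc (0:ℝ) 1 := by
    rcases le_total (u 0) (u 1) with h'|h'
    · apply intermediate_value_Icc zero_le_one hu.continuousOn
      rw [min_eq_left h'] at hminu; rw [max_eq_right h'] at hmaxu
      exact ⟨hminu, hmaxu⟩
    · apply intermediate_value_Icc' zero_le_one hu.continuousOn
      rw [min_eq_right h'] at hminu; rw [max_eq_left h'] at hmaxu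
      exact ⟨hminu, hmaxu⟩
  obtain ⟨m, hm⟩ := h t ht
  rw [hut] at hm
  have h2 : (2*(m:ℝ)) * a = (2*(M:ℝ) + 1) * a := by rw [hc] at hm; linarith
  have h3 : (2*(m:ℝ)) = 2*(M:ℝ) + 1 := mul_right_cancel₀ (ne_of_gt ha) h2
  have h4 : (2*m : ℤ) = 2*M + 1 := by exact_mod_cast h3
  omega

lemma windsTo_unique {γ : ℝ → ℂ} {k k' : ℤ} (h : windsTo γ k) (h' : windsTo γ k') : k = k' := by
  obtain ⟨ℓ₁, hc₁, he₁, hd₁⟩ := h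
  obtain ⟨ℓ₂, hc₂, he₂, hd₂⟩ := h'
  set u : ℝ → ℝ := fun t => (ℓ₁ t - ℓ₂ t).im with hu_def
  have hu : Continuous u := Complex.continuous_im.comp (hc₁.sub hc₂)
  have hint : ∀ t ∈ Icc (0:ℝ) 1, ∃ m : ℤ, u t = m * (2*Real.pi) := by
    intro t ht
    have hee : Complex.exp (ℓ₁ t) = Complex.exp (ℓ₂ t) := by rw [he₁ t ht, he₂ t ht]
    obtain ⟨n, hn⟩ := Complex.exp_eq_exp_iff_exists_int.mp hee
    refine ⟨n, ?_⟩
    have hd : ℓ₁ t - ℓ₂ t = (n:ℂ) * (2*(Real.pi:ℂ)*Complex.I) := by rw [hn]; ring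
    rw [hu_def]
    simp only [hd]
    simp [Complex.mul_im, Complex.mul_re]
  have h10 := intmul_constant u hu (2*Real.pi) (by positivity) hint
  have hdiff : (ℓ₁ 1 - ℓ₂ 1) - (ℓ₁ 0 - ℓ₂ 0) = 2*(Real.pi:ℂ)*Complex.I*((k:ℂ) - (k':ℂ)) := by
    have : (ℓ₁ 1 - ℓ₁ 0) - (ℓ₂ 1 - ℓ₂ 0) = 2*(Real.pi:ℂ)*Complex.I*((k:ℂ) - (k':ℂ)) := by
      rw [hd₁, hd₂]; push_cast; ring
    linear_combination this
  have him := congrArg Complex.im hdiff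
  have hlhs : ((ℓ₁ 1 - ℓ₂ 1) - (ℓ₁ 0 - ℓ₂ 0)).im = u 1 - u 0 := by simp [hu_def]
  rw [hlhs, h10, sub_self] at him
  have hrhs : (2*(Real.pi:ℂ)*Complex.I*((k:ℂ) - (k':ℂ))).im = 2*Real.pi*((k:ℝ) - (k':ℝ)) := by
    simp [Complex.mul_im, Complex.mul_re]
  rw [hrhs] at him
  have : (k:ℝ) = (k':ℝ) := by
    have hπ : (0:ℝ) < 2*Real.pi := by positivity
    by_contra hkk
    have : 2*Real.pi*((k:ℝ) - (k':ℝ)) ≠ 0 := by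
      apply mul_ne_zero (ne_of_gt hπ)
      intro hz; exact hkk (by linarith [sub_eq_zero.mp hz])
    exact this him.symm
  exact_mod_cast this

lemma windsTo_exists (γ : ℝ → ℂ) (hc : Continuous γ) (hne : ∀ t, γ t ≠ 0) (hl : γ 1 = γ 0) :
    ∃ k : ℤ, windsTo γ k := by
  obtain ⟨ℓ, hℓc, hℓ⟩ := liftExists γ hc hne
  have hee : Complex.exp (ℓ 1) = Complex.exp (ℓ 0) := by
    rw [hℓ 1 ⟨zero_le_one, le_refl 1⟩, hℓ 0 ⟨le_refl 0, zero_le_one⟩, hl]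
  obtain ⟨n, hn⟩ := Complex.exp_eq_exp_iff_exists_int.mp hee
  exact ⟨n, ℓ, hℓc, hℓ, by rw [hn]; push_cast; ring⟩

lemma windsTo_rouche {γ₁ γ₂ : ℝ → ℂ} {k : ℤ} (h : windsTo γ₁ k)
    (hc1 : Continuous γ₁) (hc2 : Continuous γ₂)
    (hl1 : γ₁ 1 = γ₁ 0) (hl2 : γ₂ 1 = γ₂ 0)
    (hlt : ∀ t, ‖γ₂ t - γ₁ t‖ < ‖γ₁ t‖) : windsTo γ₂ k := by
  obtain ⟨ℓ, hℓc, hℓ, hℓd⟩ := h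
  have hprops := fun t => ratio_props (hlt t)
  have hrc : Continuous fun t => γ₂ t / γ₁ t := hc2.div hc1 fun t => (hprops t).1
  have hLc : Continuous fun t => Complex.log (γ₂ t / γ₁ t) := by
    refine continuous_iff_continuousAt.mpr fun t => ?_
    have h1 : ContinuousAt Complex.log (γ₂ t / γ₁ t) :=
      continuousAt_clog (Complex.mem_slitPlane_iff.mpr (Or.inl (hprops t).2.2.1))
    exact Filter.Tendsto.comp h1 hrc.continuousAt
  refine ⟨fun t => ℓ t + Complex.log (γ₂ t / γ₁ t), hℓc.add hLc, fun t ht => ?_, ?_⟩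
  · show Complex.exp (ℓ t + Complex.log (γ₂ t / γ₁ t)) = γ₂ t
    rw [Complex.exp_add, hℓ t ht, Complex.exp_log (hprops t).2.2.2]
    rw [mul_comm, div_mul_cancel₀ _ (hprops t).1]
  · show (ℓ 1 + Complex.log (γ₂ 1 / γ₁ 1)) - (ℓ 0 + Complex.log (γ₂ 0 / γ₁ 0)) = _
    rw [hl1, hl2]
    linear_combination hℓd

lemma windsTo_const (c : ℂ) (hc : c ≠ 0) : windsTo (fun _ => c) 0 := by
  refine ⟨fun _ => Complex.log c, continuous_const, fun t _ => Complex.exp_log hc, by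
    show Complex.log c - Complex.log c = _
    push_cast
    ring⟩

lemma windsTo_circle (R : ℝ) (hR : 0 < R) :
    windsTo (fun t => (R:ℂ) * Complex.exp (2*(Real.pi:ℂ)*Complex.I*t)) 1 := by
  refine ⟨fun t => (Real.log R : ℂ) + 2*(Real.pi:ℂ)*Complex.I*t, ?_, fun t _ => ?_, by
    show ((Real.log R : ℂ) + 2*(Real.pi:ℂ)*Complex.I*(1:ℝ))
      - ((Real.log R : ℂ) + 2*(Real.pi:ℂ)*Complex.I*(0:ℝ)) = _
    push_cast
    ring⟩
  · exact continuous_const.add (continuous_const.mul Complex.continuous_ofReal)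
  · rw [Complex.exp_add]
    congr 1
    rw [← Complex.ofReal_exp, Real.exp_log hR]

lemma windsTo_norm {γ : ℝ → ℂ} {k : ℤ} (h : windsTo γ k) (hl : γ 1 = γ 0) :
    windsTo (fun t => γ t / (‖γ t‖ : ℂ)) k := by
  obtain ⟨ℓ, hℓc, hℓ, hℓd⟩ := h
  have hnorm : ∀ t ∈ Icc (0:ℝ) 1, (‖γ t‖:ℝ) = Real.exp (ℓ t).re := by
    intro t ht
    rw [← hℓ t ht, Complex.norm_exp]
  refine ⟨fun t => ℓ t - ((ℓ t).re : ℂ), hℓc.sub (Complex.continuous_ofReal.comp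
    (Complex.continuous_re.comp hℓc)), fun t ht => ?_, ?_⟩
  · show Complex.exp (ℓ t - ((ℓ t).re : ℂ)) = γ t / (‖γ t‖ : ℂ)
    rw [Complex.exp_sub, hℓ t ht, hnorm t ht, Complex.ofReal_exp]
  · show (ℓ 1 - ((ℓ 1).re : ℂ)) - (ℓ 0 - ((ℓ 0).re : ℂ)) = _
    have hre : (ℓ 1).re = (ℓ 0).re := by
      apply Real.exp_injective
      rw [← hnorm 1 ⟨zero_le_one, le_refl 1⟩, ← hnorm 0 ⟨le_refl 0, zero_le_one⟩, hl]
    rw [show (ℓ 1 - ((ℓ 1).re:ℂ)) - (ℓ 0 - ((ℓ 0).re:ℂ))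
      = (ℓ 1 - ℓ 0) - (((ℓ 1).re:ℂ) - ((ℓ 0).re:ℂ)) from by ring, hre, sub_self, sub_zero, hℓd]

end WindBasic

section Homotopy

lemma windsTo_homotopy (H : ℝ → ℝ → ℂ)
    (hc : ContinuousOn (fun q : ℝ × ℝ => H q.1 q.2) (Icc (0:ℝ) 1 ×ˢ univ))
    (hper : ∀ s ∈ Icc (0:ℝ) 1, ∀ t, H s (t+1) = H s t)
    (hne : ∀ s ∈ Icc (0:ℝ) 1, ∀ t, H s t ≠ 0)
    {k : ℤ} (h0 : windsTo (H 0) k) : windsTo (H 1) k := by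
  have hfr : ∀ s ∈ Icc (0:ℝ) 1, ∀ t : ℝ, H s t = H s (Int.fract t) := by
    intro s hs t
    have hp : Function.Periodic (H s) 1 := fun x => hper s hs x
    have : Int.fract t = t - (⌊t⌋:ℝ) * 1 := by rw [mul_one]; rfl
    rw [this, hp.sub_int_mul_eq ⌊t⌋]
  have hfrIcc : ∀ t : ℝ, Int.fract t ∈ Icc (0:ℝ) 1 :=
    fun t => ⟨Int.fract_nonneg t, (Int.fract_lt_one t).le⟩
  have hslice : ∀ s ∈ Icc (0:ℝ) 1, Continuous (H s) := by
    intro s hs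
    have hmap : Continuous fun t : ℝ => ((s, t) : ℝ × ℝ) :=
      continuous_const.prodMk continuous_id
    exact hc.comp_continuous hmap fun t => ⟨hs, mem_univ t⟩
  have hloop : ∀ s ∈ Icc (0:ℝ) 1, H s 1 = H s 0 := by
    intro s hs; simpa using hper s hs 0
  set Q := Icc (0:ℝ) 1 ×ˢ Icc (0:ℝ) 1 with hQ_def
  have hQ : IsCompact Q := isCompact_Icc.prod isCompact_Icc
  have hQsub : Q ⊆ Icc (0:ℝ) 1 ×ˢ (univ : Set ℝ) := prod_mono_right (subset_univ _)
  have hQne : Q.Nonempty := ⟨(0,0), ⟨⟨le_refl _, zero_le_one⟩, ⟨le_refl _, zero_le_one⟩⟩⟩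
  obtain ⟨q₀, hq₀, hq₀min⟩ := hQ.exists_isMinOn hQne ((hc.mono hQsub).norm)
  set m := ‖H q₀.1 q₀.2‖ with hm_def
  have hm : 0 < m := norm_pos_iff.mpr (hne q₀.1 hq₀.1 q₀.2)
  have hlow : ∀ s ∈ Icc (0:ℝ) 1, ∀ t : ℝ, m ≤ ‖H s t‖ := by
    intro s hs t
    rw [hfr s hs t]
    exact hq₀min (Set.mk_mem_prod hs (hfrIcc t))
  have huc := hQ.uniformContinuousOn_of_continuous (hc.mono hQsub)
  rw [Metric.uniformContinuousOn_iff] at huc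
  obtain ⟨δ, hδ, hδ'⟩ := huc m hm
  have hclose : ∀ s ∈ Icc (0:ℝ) 1, ∀ s' ∈ Icc (0:ℝ) 1, dist s s' < δ →
      ∀ t : ℝ, ‖H s t - H s' t‖ < m := by
    intro s hs s' hs' hss t
    rw [hfr s hs t, hfr s' hs' t, ← dist_eq_norm]
    apply hδ' (s, Int.fract t) (Set.mk_mem_prod hs (hfrIcc t))
      (s', Int.fract t) (Set.mk_mem_prod hs' (hfrIcc t))
    rw [Prod.dist_eq]
    simp only [dist_self]
    exact max_lt hss hδ
  obtain ⟨N, hN⟩ := exists_nat_gt (1/δ)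
  have hNpos : 0 < (N:ℝ) := lt_trans (by positivity) hN
  have hstep : 1/(N:ℝ) < δ := by
    rw [div_lt_iff₀ hNpos]
    rw [div_lt_iff₀ hδ] at hN
    linarith
  have hmem : ∀ j : ℕ, j ≤ N → (j:ℝ)/N ∈ Icc (0:ℝ) 1 := fun j hj =>
    ⟨by positivity, by rw [div_le_one hNpos]; exact_mod_cast hj⟩
  have key : ∀ j : ℕ, j ≤ N → windsTo (H ((j:ℝ)/N)) k := by
    intro j
    induction j with
    | zero =>
      intro _
      have h00 : ((0:ℕ):ℝ)/N = 0 := by simp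
      rw [h00]
      exact h0
    | succ j ih =>
      intro hj1
      have hjm := hmem j (Nat.le_of_succ_le hj1)
      have hj1m := hmem (j+1) hj1
      refine windsTo_rouche (ih (Nat.le_of_succ_le hj1)) (hslice _ hjm) (hslice _ hj1m)
        (hloop _ hjm) (hloop _ hj1m) ?_
      intro t
      have hd : dist (((j+1:ℕ):ℝ)/N) ((j:ℝ)/N) < δ := by
        rw [Real.dist_eq]
        have : ((j+1:ℕ):ℝ)/N - (j:ℝ)/N = 1/N := by push_cast; ring
        rw [this, abs_of_pos (by positivity)]
        exact hstep
      exact lt_of_lt_of_le (hclose _ hj1m _ hjm hd t) (hlow _ hjm t)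
  have hNN : ((N:ℕ):ℝ)/N = 1 := div_self (ne_of_gt hNpos)
  have := key N le_rfl
  rwa [hNN] at this

end Homotopy

section Unbounded

lemma periodic_fract_eq (γ : ℝ → ℂ) (hper : ∀ t, γ (t+1) = γ t) (t : ℝ) :
    γ t = γ (Int.fract t) := by
  have hp : Function.Periodic γ 1 := hper
  have h : Int.fract t = t - (⌊t⌋:ℝ) * 1 := by rw [mul_one]; rfl
  rw [h, hp.sub_int_mul_eq ⌊t⌋]

lemma range_eq_image_of_periodic (γ : ℝ → ℂ) (hper : ∀ t, γ (t+1) = γ t) :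
    range γ = γ '' Icc (0:ℝ) 1 := by
  apply Subset.antisymm
  · rintro _ ⟨t, rfl⟩
    rw [periodic_fract_eq γ hper t]
    exact mem_image_of_mem _ ⟨Int.fract_nonneg t, (Int.fract_lt_one t).le⟩
  · exact image_subset_range γ _

lemma windsTo_zero_of_unbounded (γ : ℝ → ℂ) (hc : Continuous γ)
    (hper : ∀ t, γ (t+1) = γ t) (z : ℂ) (hz : z ∉ range γ)
    (hub : ¬ Bornology.IsBounded (connectedComponentIn (range γ)ᶜ z)) :
    windsTo (fun t => γ t - z) 0 := by
  set S := range γ with hS_def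
  have hScpt : IsCompact S := by
    rw [hS_def, range_eq_image_of_periodic γ hper]
    exact isCompact_Icc.image hc
  have hSo : IsOpen Sᶜ := hScpt.isClosed.isOpen_compl
  set U := connectedComponentIn Sᶜ z with hU_def
  have hUo : IsOpen U := hSo.connectedComponentIn
  have hzU : z ∈ U := mem_connectedComponentIn hz
  have hUconn : IsConnected U := ⟨⟨z, hzU⟩, isPreconnected_connectedComponentIn⟩
  have hUpath : IsPathConnected U := (hUo.isConnected_iff_isPathConnected).mp hUconn
  obtain ⟨tb, htb, htbmax⟩ := isCompact_Icc.exists_isMaxOn (Set.nonempty_Icc.mpr zero_le_one)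
    ((continuous_norm.comp hc).continuousOn)
  set B := ‖γ tb‖ with hB_def
  have hB : ∀ t : ℝ, ‖γ t‖ ≤ B := by
    intro t
    rw [periodic_fract_eq γ hper t]
    exact htbmax ⟨Int.fract_nonneg t, (Int.fract_lt_one t).le⟩
  obtain ⟨w, hwU, hw⟩ : ∃ w ∈ U, B + 1 ≤ ‖w‖ := by
    by_contra hcon
    push_neg at hcon
    apply hub
    apply (Metric.isBounded_ball (x := (0:ℂ)) (r := B+1)).subset
    intro w hwU
    rw [Metric.mem_ball, dist_zero_right]
    exact hcon w hwU
  have hwne : w ≠ 0 := by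
    intro h0
    rw [h0] at hw
    simp at hw
    nlinarith [hB 0, norm_nonneg (γ 0)]
  have hfar : windsTo (fun t => γ t - w) 0 := by
    refine windsTo_rouche (windsTo_const (-w) (neg_ne_zero.mpr hwne)) continuous_const
      (hc.sub continuous_const) rfl (by simp [show γ 1 = γ 0 from by simpa using hper 0]) ?_
    intro t
    simp only [sub_neg_eq_add, sub_add_cancel, norm_neg]
    calc ‖γ t‖ ≤ B := hB t
    _ < B + 1 := by linarith
    _ ≤ ‖w‖ := hw
  obtain ⟨P, hP⟩ := hUpath.joinedIn z hzU w hwU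
  set Pe : ℝ → ℂ := fun s => P (Set.projIcc 0 1 zero_le_one s) with hPe_def
  have hPec : Continuous Pe := P.continuous.comp continuous_projIcc
  have hPeU : ∀ s, Pe s ∈ U := fun s => hP _
  have hPe0 : Pe 0 = z := by
    rw [hPe_def]
    simp only [Set.projIcc_left]
    exact P.source
  have hPe1 : Pe 1 = w := by
    rw [hPe_def]
    simp only [Set.projIcc_right]
    exact P.target
  have hkey := windsTo_homotopy (fun s t => γ t - Pe (1 - s))
    (Continuous.continuousOn (by
      exact (hc.comp continuous_snd).sub (hPec.comp (continuous_const.sub continuous_fst))))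
    (fun s _ t => by simp [hper t])
    (fun s _ t => sub_ne_zero.mpr (by
      intro he
      exact absurd (he ▸ mem_range_self t) (fun hmem => (hPeU (1 - s)) |>
        fun hU' => (connectedComponentIn_subset Sᶜ z hU') hmem)))
    (k := 0) (by simpa [hPe1] using hfar)
  simpa [hPe0] using hkey

end Unbounded

section Star
open Complex

/-- Parametrization of the circle. -/
noncomputable def cpar : ℝ → Circle := fun t => Circle.exp (2 * Real.pi * t)

lemma cpar_continuous : Continuous cpar :=
  (map_continuous Circle.exp).comp (continuous_const.mul continuous_id)

lemma cpar_periodic (t : ℝ) : cpar (t + 1) = cpar t := by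
  unfold cpar
  rw [show 2 * Real.pi * (t + 1) = 2 * Real.pi * t + 2 * Real.pi by ring]
  exact Circle.periodic_exp _

lemma cpar_surjective : Function.Surjective cpar := by
  intro x
  refine ⟨Complex.arg x / (2 * Real.pi), ?_⟩
  unfold cpar
  rw [mul_div_cancel₀ _ (by positivity : (2:ℝ) * Real.pi ≠ 0)]
  exact Circle.exp_arg x

lemma range_cpar_comp (φ : Circle → ℂ) : range (fun t => φ (cpar t)) = range φ := by
  rw [show (fun t => φ (cpar t)) = φ ∘ cpar from rfl]
  exact cpar_surjective.range_comp φ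

/-- Borsuk-type criterion: if `z` lies in a *bounded* complementary component of an embedded
circle, then the winding number of the circle around `z` cannot be `0`. -/
lemma star (φ : Circle → ℂ) (hφc : Continuous φ) (hφi : Function.Injective φ)
    (z : ℂ) (hz : z ∉ range φ)
    (hb : Bornology.IsBounded (connectedComponentIn (range φ)ᶜ z))
    (h0 : windsTo (fun t => φ (cpar t) - z) 0) : False := by
  classical
  haveI : Fact ((0:ℝ) < 1) := ⟨zero_lt_one⟩
  set γ : ℝ → ℂ := fun t => φ (cpar t) with hγ_def
  have hγc : Continuous γ := hφc.comp cpar_continuous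
  have hγne : ∀ t, γ t - z ≠ 0 := fun t =>
    sub_ne_zero.mpr fun he => hz (he ▸ mem_range_self (cpar t))
  -- extract the lift
  obtain ⟨ℓ, hℓc, hℓraw, hℓd⟩ := h0
  have hℓ : ∀ t ∈ Icc (0:ℝ) 1, Complex.exp (ℓ t) = γ t - z := fun t ht => hℓraw t ht
  have hℓ10 : ℓ 1 = ℓ 0 := by
    have h' : ℓ 1 - ℓ 0 = 0 := by rw [hℓd]; simp
    exact sub_eq_zero.mp h'
  set θ : ℝ → ℝ := fun t => (ℓ t).im with hθ_def
  have hθc : Continuous θ := Complex.continuous_im.comp hℓc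
  have hθ10 : θ 0 = θ (0 + 1) := by rw [hθ_def]; simp [hℓ10]
  have hkey : ∀ t ∈ Icc (0:ℝ) 1,
      Complex.exp ((θ t : ℂ) * Complex.I) = (γ t - z) / (‖γ t - z‖ : ℂ) := by
    intro t ht
    have h1 : (θ t : ℂ) * Complex.I = ℓ t - ((ℓ t).re : ℂ) := by
      rw [eq_sub_iff_add_eq, add_comm]
      exact Complex.re_add_im (ℓ t)
    have h2 : (‖γ t - z‖ : ℝ) = Real.exp (ℓ t).re := by
      rw [← hℓ t ht, Complex.norm_exp]
    rw [h1, Complex.exp_sub, hℓ t ht, h2, Complex.ofReal_exp]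
  -- descend to a continuous function on the circle
  set F : AddCircle (1:ℝ) → ℝ := AddCircle.liftIco 1 0 θ with hF_def
  have hFc : Continuous F := by
    apply AddCircle.liftIco_continuous
    · simpa using hθ10
    · exact hθc.continuousOn
  set homeo := AddCircle.homeomorphCircle (one_ne_zero (α := ℝ)) with hhomeo_def
  set h₀ : Circle → ℝ := fun x => F (homeo.symm x) with hh₀_def
  have hh₀c : Continuous h₀ := hFc.comp homeo.symm.continuous
  have hprop : ∀ x : Circle,
      Complex.exp ((h₀ x : ℂ) * Complex.I) = (φ x - z) / (‖φ x - z‖ : ℂ) := by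
    intro x
    obtain ⟨t, ht, hteq⟩ := AddCircle.eq_coe_Ico (homeo.symm x)
    have htIco : t ∈ Ico (0:ℝ) (0 + 1) := by simpa using ht
    have hFt : h₀ x = θ t := by
      show F (homeo.symm x) = θ t
      rw [← hteq]
      exact AddCircle.liftIco_coe_apply htIco
    have hxt : x = cpar t := by
      have h1 : homeo ((t : ℝ) : AddCircle (1:ℝ)) = x := by rw [hteq]; exact homeo.apply_symm_apply x
      rw [← h1, hhomeo_def, AddCircle.homeomorphCircle_apply, AddCircle.toCircle_apply_mk]
      unfold cpar
      norm_num
    rw [hFt, hxt]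
    exact hkey t ⟨ht.1, ht.2.le⟩
  -- transfer to a function on the image K of the embedded circle
  set K := range φ with hK_def
  have hKcpt : IsCompact K := isCompact_range hφc
  have hKcl : IsClosed K := hKcpt.isClosed
  set eqv : Circle ≃ K := Equiv.ofInjective φ hφi with heqv_def
  have heqvc : Continuous eqv := Continuous.subtype_mk hφc _
  set homeoK : Circle ≃ₜ K := Continuous.homeoOfEquivCompactToT2 heqvc with hhomeoK_def
  set ψ : K → Circle := fun w => homeoK.symm w with hψ_def
  have hψc : Continuous ψ := homeoK.symm.continuous
  have hψval : ∀ w : K, φ (ψ w) = (w : ℂ) := by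
    intro w
    have h1 : eqv (ψ w) = w := homeoK.apply_symm_apply w
    have h2 : (eqv (ψ w) : ℂ) = φ (ψ w) := rfl
    rw [← h2, h1]
  -- Tietze extension
  obtain ⟨gext, hgext⟩ := ContinuousMap.exists_restrict_eq (X := ℂ) (Y := ℝ) hKcl
    ⟨fun w => h₀ (ψ w), hh₀c.comp hψc⟩
  have hgK : ∀ w : K, gext (w : ℂ) = h₀ (ψ w) := by
    intro w
    have := DFunLike.congr_fun hgext w
    simpa using this
  set E : ℂ → ℂ := fun w => Complex.exp ((gext w : ℂ) * Complex.I) with hE_def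
  have hEc : Continuous E :=
    Complex.continuous_exp.comp ((Complex.continuous_ofReal.comp gext.continuous).mul
      continuous_const)
  have hEK : ∀ w ∈ K, E w = (w - z) / (‖w - z‖ : ℂ) := by
    intro w hw
    have h1 : gext w = h₀ (ψ ⟨w, hw⟩) := hgK ⟨w, hw⟩
    have h2 := hprop (ψ ⟨w, hw⟩)
    rw [hψval ⟨w, hw⟩] at h2
    rw [hE_def]
    simp only [h1]
    exact h2
  -- the bounded component
  set C := connectedComponentIn Kᶜ z with hC_def
  have hCo : IsOpen C := hKcl.isOpen_compl.connectedComponentIn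
  have hzC : z ∈ C := mem_connectedComponentIn hz
  have hfront : frontier C ⊆ K := by
    intro w hwf
    by_contra hwK
    have hnotC : w ∉ C := by
      have := hwf.2
      rwa [hCo.interior_eq] at this
    have hwD : w ∈ connectedComponentIn Kᶜ w := mem_connectedComponentIn hwK
    have hDo : IsOpen (connectedComponentIn Kᶜ w) := hKcl.isOpen_compl.connectedComponentIn
    obtain ⟨y, hyD, hyC⟩ := mem_closure_iff.mp hwf.1 _ hDo hwD
    have h1 : connectedComponentIn Kᶜ z = connectedComponentIn Kᶜ y :=
      connectedComponentIn_eq (show y ∈ connectedComponentIn Kᶜ z from hyC)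
    have h2 : connectedComponentIn Kᶜ w = connectedComponentIn Kᶜ y :=
      connectedComponentIn_eq hyD
    apply hnotC
    show w ∈ connectedComponentIn Kᶜ z
    rw [h1, ← h2]
    exact hwD
  -- glue
  set u : ℂ → ℂ := fun w => (w - z) / (‖w - z‖ : ℂ) with hu_def
  have hzncl : z ∉ closure Cᶜ := by
    intro hcl
    obtain ⟨y, hy1, hy2⟩ := mem_closure_iff.mp hcl C hCo hzC
    exact hy2 hy1
  have hucont : ContinuousOn u (closure Cᶜ) := by
    apply ContinuousOn.div
    · exact (continuous_id.sub continuous_const).continuousOn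
    · exact (Complex.continuous_ofReal.comp
        (continuous_norm.comp (continuous_id.sub continuous_const))).continuousOn
    · intro w hw
      have hwz : w ≠ z := fun he => hzncl (he ▸ hw)
      simpa [sub_eq_zero] using hwz
  set G : ℂ → ℂ := C.piecewise E u with hG_def
  have hGc : Continuous G := by
    apply continuous_piecewise
    · intro a ha
      exact hEK a (hfront ha)
    · exact hEc.continuousOn
    · exact hucont
  have hGne : ∀ w, G w ≠ 0 := by
    intro w
    by_cases hw : w ∈ C
    · rw [hG_def, Set.piecewise_eq_of_mem _ _ _ hw]
      exact Complex.exp_ne_zero _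
    · rw [hG_def, Set.piecewise_eq_of_notMem _ _ _ hw]
      have hwz : w ≠ z := fun he => hw (he ▸ hzC)
      apply div_ne_zero (sub_ne_zero.mpr hwz)
      simpa [sub_eq_zero] using hwz
  -- big circle
  obtain ⟨r, hr⟩ := hb.subset_closedBall (0:ℂ)
  set R := max r ‖z‖ + 1 with hR_def
  have hRpos : 0 < R := by
    have := norm_nonneg z
    have := le_max_right r ‖z‖
    linarith
  have hzR : ‖z‖ < R := by
    have := le_max_right r ‖z‖
    linarith
  have hrR : r < R := by
    have := le_max_left r ‖z‖
    linarith
  set c : ℝ → ℂ := fun t => (R:ℂ) * Complex.exp (2*(Real.pi:ℂ)*Complex.I*t) with hc_def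
  have hcc : Continuous c := continuous_const.mul (Complex.continuous_exp.comp
    (continuous_const.mul Complex.continuous_ofReal))
  have hcnorm : ∀ t : ℝ, ‖c t‖ = R := by
    intro t
    rw [hc_def]
    simp only [norm_mul, Complex.norm_exp]
    have : (2*(Real.pi:ℂ)*Complex.I*(t:ℝ)).re = 0 := by simp
    rw [this, Real.exp_zero, mul_one, Complex.norm_real, Real.norm_eq_abs, abs_of_pos hRpos]
  have hcper : ∀ t : ℝ, c (t + 1) = c t := by
    intro t
    rw [hc_def]
    simp only
    rw [show 2*(Real.pi:ℂ)*Complex.I*((t:ℝ)+1:ℝ) = 2*(Real.pi:ℂ)*Complex.I*(t:ℝ)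
      + 2*(Real.pi:ℂ)*Complex.I by push_cast; ring]
    rw [Complex.exp_add, Complex.exp_two_pi_mul_I, mul_one]
  have hcloop : c 1 = c 0 := by simpa using hcper 0
  have hcC : ∀ t : ℝ, c t ∉ C := by
    intro t hct
    have h1 : ‖c t‖ ≤ r := by
      have := hr (hC_def ▸ hct)
      rwa [Metric.mem_closedBall, dist_zero_right] at this
    rw [hcnorm t] at h1
    linarith
  -- winding of G along the big circle is 0 (G extends to the disk)
  have hGc0 : windsTo (fun t => G (c t)) 0 := by
    have := windsTo_homotopy (fun s t => G ((s:ℝ) * c t))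
      (Continuous.continuousOn (hGc.comp
        ((Complex.continuous_ofReal.comp continuous_fst).mul (hcc.comp continuous_snd))))
      (fun s _ t => by simp [hcper t])
      (fun s _ t => hGne _)
      (k := 0) (by simpa using windsTo_const (G 0) (hGne 0))
    simpa using this
  -- winding of G along the big circle is 1 (G = u far out)
  have hGc1 : windsTo (fun t => G (c t)) 1 := by
    have h5 : windsTo c 1 := windsTo_circle R hRpos
    have h6 : windsTo (fun t => c t - z) 1 := by
      refine windsTo_rouche h5 hcc (hcc.sub continuous_const) hcloop (by simp [hcloop]) ?_
      intro t
      simp only [sub_sub_cancel_left, norm_neg]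
      rw [hcnorm t]
      exact hzR
    have h7 : windsTo (fun t => (c t - z) / (‖c t - z‖ : ℂ)) 1 :=
      windsTo_norm h6 (by simp [hcloop])
    have heq : (fun t => G (c t)) = fun t => (c t - z) / (‖c t - z‖ : ℂ) := by
      funext t
      rw [hG_def, Set.piecewise_eq_of_notMem _ _ _ (hcC t)]
    rw [heq]
    exact h7
  exact absurd (windsTo_unique hGc0 hGc1) (by norm_num)

end Star


/-- Nesting is preserved along a continuous path of pairs of disjoint embedded circles:
if `f, g : [0,1] × S¹ → ℝ²` are continuous, each `f(t,·)`, `g(t,·)` is injective, the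
two images are disjoint for every `t`, and `g(0, S¹)` lies in the bounded complementary
component of `f(0, S¹)`, then `g(1, S¹)` lies in the bounded complementary component of
`f(1, S¹)`. -/
theorem stmt18 (f g : ℝ → Circle → ℂ)
    (hf : ContinuousOn (fun p : ℝ × Circle => f p.1 p.2) (Icc 0 1 ×ˢ univ))
    (hg : ContinuousOn (fun p : ℝ × Circle => g p.1 p.2) (Icc 0 1 ×ˢ univ))
    (hfinj : ∀ t ∈ Icc (0 : ℝ) 1, Function.Injective (f t))
    (hginj : ∀ t ∈ Icc (0 : ℝ) 1, Function.Injective (g t))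
    (hdisj : ∀ t ∈ Icc (0 : ℝ) 1, Disjoint (range (f t)) (range (g t)))
    (h0 : ∃ x ∈ (range (f 0))ᶜ, Bornology.IsBounded (connectedComponentIn (range (f 0))ᶜ x) ∧
      range (g 0) ⊆ connectedComponentIn (range (f 0))ᶜ x) :
    ∃ x ∈ (range (f 1))ᶜ, Bornology.IsBounded (connectedComponentIn (range (f 1))ᶜ x) ∧
      range (g 1) ⊆ connectedComponentIn (range (f 1))ᶜ x := by
  classical
  obtain ⟨x, hx, hxb, hxsub⟩ := h0
  have h0I : (0:ℝ) ∈ Icc (0:ℝ) 1 := ⟨le_refl 0, zero_le_one⟩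
  have h1I : (1:ℝ) ∈ Icc (0:ℝ) 1 := ⟨zero_le_one, le_refl 1⟩
  have hslice : ∀ (F : ℝ → Circle → ℂ),
      ContinuousOn (fun p : ℝ × Circle => F p.1 p.2) (Icc 0 1 ×ˢ univ) →
      ∀ t ∈ Icc (0:ℝ) 1, Continuous (F t) := by
    intro F hF t ht
    exact hF.comp_continuous (continuous_const.prodMk continuous_id) fun y => ⟨ht, mem_univ y⟩
  set pt : Circle := 1 with hpt_def
  have hne0 : ∀ s ∈ Icc (0:ℝ) 1, ∀ x y, f s x ≠ g s y := by
    intro s hs x' y' he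
    exact Set.disjoint_left.mp (hdisj s hs) (mem_range_self x') (he ▸ mem_range_self y')
  have hcpar10 : cpar 1 = cpar 0 := by simpa using cpar_periodic 0
  have hγ0c : Continuous fun t => f 0 (cpar t) := (hslice f hf 0 h0I).comp cpar_continuous
  have hγ1c : Continuous fun t => f 1 (cpar t) := (hslice f hf 1 h1I).comp cpar_continuous
  obtain ⟨k, hk⟩ := windsTo_exists (fun t => f 0 (cpar t) - g 0 pt)
    (hγ0c.sub continuous_const)
    (fun t => sub_ne_zero.mpr (hne0 0 h0I _ _))
    (by show f 0 (cpar 1) - g 0 pt = f 0 (cpar 0) - g 0 pt; rw [hcpar10])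
  have hz₀ : g 0 pt ∉ range (f 0) := by
    rintro ⟨x', he⟩
    exact hne0 0 h0I x' pt he
  have hz₀C : g 0 pt ∈ connectedComponentIn (range (f 0))ᶜ x := hxsub (mem_range_self pt)
  have hbz₀ : Bornology.IsBounded (connectedComponentIn (range (f 0))ᶜ (g 0 pt)) := by
    have he := connectedComponentIn_eq hz₀C
    rwa [he] at hxb
  have hk0 : k ≠ 0 := by
    intro hkz
    rw [hkz] at hk
    exact star (f 0) (hslice f hf 0 h0I) (hfinj 0 h0I) (g 0 pt) hz₀ hbz₀ hk
  have hH : windsTo (fun t => f 1 (cpar t) - g 1 pt) k := by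
    have hcont : ContinuousOn (fun q : ℝ × ℝ => f q.1 (cpar q.2) - g q.1 pt)
        (Icc (0:ℝ) 1 ×ˢ univ) := by
      apply ContinuousOn.sub
      · exact hf.comp ((continuous_fst.prodMk
          (cpar_continuous.comp continuous_snd)).continuousOn)
          (fun q hq => ⟨hq.1, mem_univ _⟩)
      · exact hg.comp ((continuous_fst.prodMk continuous_const).continuousOn)
          (fun q hq => ⟨hq.1, mem_univ _⟩)
    exact windsTo_homotopy (fun s t => f s (cpar t) - g s pt) hcont
      (fun s hs t => by
        show f s (cpar (t+1)) - g s pt = f s (cpar t) - g s pt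
        rw [cpar_periodic t])
      (fun s hs t => sub_ne_zero.mpr (hne0 s hs _ _)) hk
  have hz₁ : g 1 pt ∉ range (f 1) := by
    rintro ⟨x', he⟩
    exact hne0 1 h1I x' pt he
  have hbz₁ : Bornology.IsBounded (connectedComponentIn (range (f 1))ᶜ (g 1 pt)) := by
    by_contra hub
    have h8 := windsTo_zero_of_unbounded (fun t => f 1 (cpar t)) hγ1c
      (fun t => by show f 1 (cpar (t+1)) = f 1 (cpar t); rw [cpar_periodic t]) (g 1 pt)
      (by rw [range_cpar_comp]; exact hz₁)
      (by rw [range_cpar_comp]; exact hub)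
    exact hk0 (windsTo_unique hH h8)
  refine ⟨g 1 pt, hz₁, hbz₁, ?_⟩
  apply IsPreconnected.subset_connectedComponentIn
  · rw [← range_cpar_comp (g 1), ← image_univ]
    exact isPreconnected_univ.image _
      ((hslice g hg 1 h1I).comp cpar_continuous).continuousOn
  · exact mem_range_self pt
  · rintro w ⟨y', hy'⟩ hmem
    obtain ⟨x', hx'⟩ := hmem
    exact hne0 1 h1I x' y' (hx'.trans hy'.symm)
end
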